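/- For every w ∈ W with w ≠ id, the inversion set Inv(w) is a complete join-irreducible of the extended weak order: there exists a biclosed set R* ⊊ Inv(w) such that every biclosed set R' ⊊ Inv(w) satisfies R' ⊆ R*. -/

import Mathlib

open scoped NNReal

noncomputable section

/-- The ambient vector space `V = ℝ³`. -/
abbrev V : Type := Fin 3 → ℝ

/-- The symmetric bilinear form with `⟨αᵢ,αⱼ⟩ = 1` if `i = j` and `-1` otherwise. -/
def B (x y : V) : ℝ := 2 * (∑ i, x i * y i) - (∑ i, x i) * (∑ i, y i)

/-- The associated quadratic form. -/
def Q (x : V) : ℝ := B x x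

/-- The simple roots `α₁, α₂, α₃` (the standard basis vectors). -/
def α (i : Fin 3) : V := Pi.single i 1

/-- The set of simple roots. -/
def Δ : Set V := Set.range α

/-- `f` is the reflection `r_{αᵢ} : x ↦ x - 2⟨αᵢ,x⟩αᵢ` for some `i` (note `⟨αᵢ,αᵢ⟩ = 1`). -/
def IsSimpleReflection (f : V ≃ₗ[ℝ] V) : Prop :=
  ∃ i : Fin 3, ∀ x : V, f x = x - (2 * B (α i) x) • α i

/-- The group `W ≤ GL(V)` generated by the three simple reflections:
the standard reflection representation of `U₃`. -/
def W : Subgroup (V ≃ₗ[ℝ] V) := Subgroup.closure {f | IsSimpleReflection f}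

/-- The root system `Φ = {w·αᵢ : w ∈ W, i ∈ {1,2,3}}`. -/
def Φ : Set V := {x | ∃ w ∈ W, ∃ i : Fin 3, x = w (α i)}

/-- `Span_{≥0}(X)`: the set of nonnegative linear combinations of elements of `X`. -/
def nnspan (X : Set V) : Set V := (Submodule.span ℝ≥0 X : Set V)

/-- The positive roots `Φ⁺ = Φ ∩ Span_{≥0}(Δ)`. -/
def Φpos : Set V := Φ ∩ nnspan Δ

/-- `R ⊆ Φ⁺` is closed if for all `a, b ∈ R`, `Span_{≥0}{a,b} ∩ Φ⁺ ⊆ R`. -/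
def IsClosedSet (R : Set V) : Prop := ∀ a ∈ R, ∀ b ∈ R, nnspan {a, b} ∩ Φpos ⊆ R

/-- `R` is a biclosed subset of `Φ⁺`. -/
def IsBiclosed (R : Set V) : Prop := R ⊆ Φpos ∧ IsClosedSet R ∧ IsClosedSet (Φpos \ R)

/-- The inversion set `Inv(w) = Φ⁺ ∩ w·Φ⁻`, where `Φ⁻ = -Φ⁺`. -/
def Inversions (w : V ≃ₗ[ℝ] V) : Set V := Φpos ∩ (fun y => w y) '' (-Φpos)

namespace U3

lemma B_alpha (i : Fin 3) (x : V) : B (α i) x = 2 * x i - (x 0 + x 1 + x 2) := by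
  unfold B α
  rw [Fin.sum_univ_three, Fin.sum_univ_three, Fin.sum_univ_three]
  fin_cases i <;> simp [Pi.single_apply] <;> ring

def σmap (i : Fin 3) : V →ₗ[ℝ] V where
  toFun x := x - (2 * B (α i) x) • α i
  map_add' x y := by
    show (x + y) - (2 * B (α i) (x + y)) • α i = (x - (2 * B (α i) x) • α i) + (y - (2 * B (α i) y) • α i)
    have : B (α i) (x + y) = B (α i) x + B (α i) y := by
      simp [B_alpha, Pi.add_apply]; ring
    rw [this, mul_add, add_smul]; abel
  map_smul' c x := by
    show (c • x) - (2 * B (α i) (c • x)) • α i = c • (x - (2 * B (α i) x) • α i)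
    have : B (α i) (c • x) = c * B (α i) x := by
      simp [B_alpha, Pi.smul_apply, smul_eq_mul]; ring
    rw [this, smul_sub, smul_smul]; ring_nf

lemma B_alpha_alpha (i : Fin 3) : B (α i) (α i) = 1 := by
  rw [B_alpha]; fin_cases i <;> simp [α, Pi.single_apply] <;> norm_num

lemma σmap_invol (i : Fin 3) : Function.Involutive (σmap i) := by
  intro x
  show σmap i (x - (2 * B (α i) x) • α i) = x
  have h1 : B (α i) (x - (2 * B (α i) x) • α i) = - B (α i) x := by
    have hsub : ∀ u v : V, B (α i) (u - v) = B (α i) u - B (α i) v := by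
      intro u v; simp [B_alpha, Pi.sub_apply]; ring
    have hsm : ∀ (c : ℝ) (v : V), B (α i) (c • v) = c * B (α i) v := by
      intro c v; simp [B_alpha, Pi.smul_apply, smul_eq_mul]; ring
    rw [hsub, hsm, B_alpha_alpha]; ring
  show (x - (2 * B (α i) x) • α i) - (2 * B (α i) (x - (2 * B (α i) x) • α i)) • α i = x
  rw [h1]
  rw [mul_neg, neg_smul]
  abel

def σ (i : Fin 3) : V ≃ₗ[ℝ] V := LinearEquiv.ofInvolutive (σmap i) (σmap_invol i)

@[simp] lemma σ_apply (i : Fin 3) (x : V) : σ i x = x - (2 * B (α i) x) • α i := rfl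

lemma σ_simple (i : Fin 3) : IsSimpleReflection (σ i) := ⟨i, fun _ => rfl⟩

lemma simple_eq_σ {f : V ≃ₗ[ℝ] V} (hf : IsSimpleReflection f) : ∃ i, f = σ i := by
  obtain ⟨i, hi⟩ := hf
  exact ⟨i, LinearEquiv.ext fun x => by rw [hi x]; rfl⟩

lemma σ_alpha_self (i : Fin 3) : σ i (α i) = - α i := by
  rw [σ_apply, B_alpha_alpha]; module

lemma B_alpha_alpha_ne {i j : Fin 3} (h : i ≠ j) : B (α i) (α j) = -1 := by
  rw [B_alpha]
  fin_cases i <;> fin_cases j <;> simp_all [α, Pi.single_apply] <;> norm_num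

lemma σ_alpha_ne {i j : Fin 3} (h : i ≠ j) : σ i (α j) = α j + (2:ℝ) • α i := by
  rw [σ_apply, B_alpha_alpha_ne h]; module

@[simp] lemma mul_apply (e₁ e₂ : V ≃ₗ[ℝ] V) (x : V) : (e₁ * e₂) x = e₁ (e₂ x) := rfl

def mapw : List (Fin 3) → (V ≃ₗ[ℝ] V)
  | [] => 1
  | i :: l => σ i * mapw l

@[simp] lemma mapw_nil : mapw [] = 1 := rfl

@[simp] lemma mapw_cons (i : Fin 3) (l : List (Fin 3)) : mapw (i :: l) = σ i * mapw l := rfl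

lemma mapw_append (l₁ l₂ : List (Fin 3)) : mapw (l₁ ++ l₂) = mapw l₁ * mapw l₂ := by
  induction l₁ with
  | nil => simp
  | cons x t ih => simp [ih, mul_assoc]

lemma σ_mul_self (i : Fin 3) : σ i * σ i = 1 :=
  LinearEquiv.toLinearMap_injective (LinearMap.ext fun x => σmap_invol i x)

lemma σ_inv (i : Fin 3) : (σ i)⁻¹ = σ i := by
  rw [inv_eq_iff_mul_eq_one, σ_mul_self]

lemma mapw_reverse (l : List (Fin 3)) : mapw l.reverse = (mapw l)⁻¹ := by
  induction l with
  | nil => simp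
  | cons x t ih => simp [mapw_append, ih, σ_inv, mul_inv_rev]

lemma mapw_concat (l : List (Fin 3)) (x : Fin 3) :
    mapw (l ++ [x]) = mapw l * σ x := by simp [mapw_append]

def ht (v : V) : ℝ := v 0 + v 1 + v 2

lemma ht_add (u v : V) : ht (u + v) = ht u + ht v := by simp [ht]; ring
lemma ht_neg (v : V) : ht (-v) = - ht v := by simp [ht]; ring
lemma ht_smul (c : ℝ) (v : V) : ht (c • v) = c * ht v := by simp [ht]; ring
lemma ht_alpha (i : Fin 3) : ht (α i) = 1 := by
  fin_cases i <;> simp [ht, α, Pi.single_apply]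
lemma ht_nonneg {v : V} (h : 0 ≤ v) : 0 ≤ ht v := by
  have h0 := h 0; have h1 := h 1; have h2 := h 2
  simp only [Pi.zero_apply] at h0 h1 h2
  simp [ht]; linarith

lemma alpha_nonneg (i : Fin 3) : (0:V) ≤ α i := by
  intro j; by_cases h : j = i <;> simp [α, Pi.single_apply, h]

def betR : List (Fin 3) → Fin 3 → V
  | [], i => α i
  | x :: q, i => if x = i then -(betR q i) else betR q i + (2:ℝ) • betR q x

lemma betR_eq (q : List (Fin 3)) (i : Fin 3) : betR q i = mapw q.reverse (α i) := by
  induction q generalizing i with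
  | nil => simp [betR]
  | cons x t ih =>
    rw [List.reverse_cons, mapw_concat, mul_apply]
    by_cases h : x = i
    · subst h
      rw [σ_alpha_self, map_neg]
      show (if x = x then -(betR t x) else _) = _
      rw [if_pos rfl, ih]
    · rw [σ_alpha_ne h, map_add, map_smul]
      show (if x = i then _ else betR t i + (2:ℝ) • betR t x) = _
      rw [if_neg h, ih, ih]

end U3

namespace U3

lemma betR_cons_eq (x : Fin 3) (q : List (Fin 3)) : betR (x::q) x = -(betR q x) := by
  simp [betR]

lemma betR_cons_ne {x i : Fin 3} (h : x ≠ i) (q : List (Fin 3)) :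
    betR (x::q) i = betR q i + (2:ℝ) • betR q x := by
  simp [betR, h]

theorem betR_pos : ∀ (n : ℕ) (q : List (Fin 3)) (i : Fin 3), q.length = n →
    List.Chain' (· ≠ ·) (i :: q) →
    ((0 ≤ betR q i ∧ 2 * (n:ℝ) + 1 ≤ ht (betR q i)) ∧
      ∀ x q', q = x :: q' → (betR q' x ≤ betR q i ∧ ht (betR q' x) + 2 ≤ ht (betR q i))) := by
  intro n
  induction n using Nat.strong_induction_on with
  | _ n IH =>
    intro q i hlen hch
    match q with
    | [] =>
      subst hlen
      refine ⟨⟨alpha_nonneg i, by rw [show betR [] i = α i from rfl, ht_alpha]; norm_num⟩, ?_⟩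
      intro x q' h; cases h
    | [x] =>
      have hix : i ≠ x := (List.isChain_cons_cons.mp hch).1
      have hbr : betR [x] i = α i + (2:ℝ) • α x := by
        rw [betR_cons_ne (Ne.symm hix)]; rfl
      subst hlen
      constructor
      · constructor
        · rw [hbr]; intro j
          have h1 := alpha_nonneg i j; have h2 := alpha_nonneg x j
          simp only [Pi.zero_apply] at h1 h2
          simp only [Pi.zero_apply, Pi.add_apply, Pi.smul_apply, smul_eq_mul]
          linarith
        · rw [hbr, ht_add, ht_smul, ht_alpha, ht_alpha]; norm_num
      · intro x' q' heq
        obtain ⟨h1, h2⟩ : x = x' ∧ [] = q' := by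
          injection heq with h1 h2; exact ⟨h1, h2⟩
        subst h1; subst h2
        constructor
        · rw [hbr]; intro j
          have h1 := alpha_nonneg i j; have h2 := alpha_nonneg x j
          simp only [Pi.zero_apply] at h1 h2
          show α x j ≤ α i j + 2 * α x j
          linarith
        · rw [hbr, ht_add, ht_smul, ht_alpha, ht_alpha]
          show ht (α x) + 2 ≤ 1 + 2 * 1
          rw [ht_alpha]; norm_num
    | x :: y :: q'' =>
      have hix : i ≠ x := (List.isChain_cons_cons.mp hch).1
      have hc2 : List.Chain' (· ≠ ·) (x :: y :: q'') := (List.isChain_cons_cons.mp hch).2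
      have hxy : x ≠ y := (List.isChain_cons_cons.mp hc2).1
      have hc3 : List.Chain' (· ≠ ·) (y :: q'') := (List.isChain_cons_cons.mp hc2).2
      have hn2 : 2 ≤ n := by simp at hlen; omega
      have hlen' : (y :: q'').length = n - 1 := by simp at hlen ⊢; omega
      have hlt : n - 1 < n := by omega
      have IHu := IH (n-1) hlt (y :: q'') x hlen' hc2
      obtain ⟨⟨hu0, huht⟩, hub⟩ := IHu
      obtain ⟨huw, huwht⟩ := hub y q'' rfl
      set u := betR (y :: q'') x with hu
      set wv := betR q'' y with hw
      have hbr : betR (x :: y :: q'') i = betR (y :: q'') i + (2:ℝ) • u := by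
        rw [betR_cons_ne (Ne.symm hix)]
      have hcast : ((n - 1 : ℕ) : ℝ) = (n:ℝ) - 1 := by
        push_cast [Nat.cast_sub (by omega : 1 ≤ n)]; ring
      have huht' : 2 * (n:ℝ) - 1 ≤ ht u := by rw [hcast] at huht; linarith
      have hn2' : (2:ℝ) ≤ (n:ℝ) := by exact_mod_cast hn2
      by_cases hiy : i = y
      · subst hiy
        have hb2 : betR (x :: i :: q'') i = -wv + (2:ℝ) • u := by
          rw [hbr, betR_cons_eq]
        have hhtb : ht (betR (x :: i :: q'') i) = -(ht wv) + 2 * ht u := by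
          rw [hb2, ht_add, ht_neg, ht_smul]
        constructor
        · constructor
          · rw [hb2]; intro j
            have h1 := huw j; have h2 := hu0 j
            simp only [Pi.zero_apply] at h2 ⊢
            simp only [Pi.add_apply, Pi.neg_apply, Pi.smul_apply, smul_eq_mul]
            linarith
          · rw [hhtb]; linarith
        · intro x' q' heq
          obtain ⟨h1, h2⟩ : x = x' ∧ i :: q'' = q' := by
            injection heq with h1 h2; exact ⟨h1, h2⟩
          subst h1; subst h2
          constructor
          · rw [hb2]; intro j
            have h1 := huw j
            simp only [Pi.add_apply, Pi.neg_apply, Pi.smul_apply, smul_eq_mul]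
            show u j ≤ -(wv j) + 2 * u j
            linarith
          · rw [hhtb]; show ht u + 2 ≤ _; linarith
      · have IHt := IH (n-1) hlt (y :: q'') i hlen' (List.isChain_cons_cons.mpr ⟨hiy, hc3⟩)
        obtain ⟨⟨hT0, hTht⟩, -⟩ := IHt
        set T := betR (y :: q'') i with hT
        have hTht' : 2 * (n:ℝ) - 1 ≤ ht T := by rw [hcast] at hTht; linarith
        have hhtb : ht (betR (x :: y :: q'') i) = ht T + 2 * ht u := by
          rw [hbr, ht_add, ht_smul]
        constructor
        · constructor
          · rw [hbr]; intro j
            have h1 := hT0 j; have h2 := hu0 j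
            simp only [Pi.zero_apply] at h1 h2 ⊢
            simp only [Pi.add_apply, Pi.smul_apply, smul_eq_mul]
            linarith
          · rw [hhtb]; linarith
        · intro x' q' heq
          obtain ⟨h1, h2⟩ : x = x' ∧ y :: q'' = q' := by
            injection heq with h1 h2; exact ⟨h1, h2⟩
          subst h1; subst h2
          constructor
          · rw [hbr]; intro j
            have h1 := hT0 j; have h2 := hu0 j
            simp only [Pi.zero_apply] at h1 h2
            simp only [Pi.add_apply, Pi.smul_apply, smul_eq_mul]
            show u j ≤ T j + 2 * u j
            linarith
          · rw [hhtb]; show ht u + 2 ≤ _; linarith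

abbrev Red (l : List (Fin 3)) : Prop := List.Chain' (· ≠ ·) l

lemma red_rev {l : List (Fin 3)} (h : Red l) : Red l.reverse :=
  List.isChain_reverse.mpr (List.IsChain.imp (fun _ _ hab => hab.symm) h)

@[simp] lemma one_apply (x : V) : (1 : V ≃ₗ[ℝ] V) x = x := rfl

def bet (p : List (Fin 3)) (i : Fin 3) : V := mapw p (α i)

lemma bet_eq_betR (p : List (Fin 3)) (i : Fin 3) : bet p i = betR p.reverse i := by
  rw [betR_eq, List.reverse_reverse]; rfl

lemma red_concat_chain {p : List (Fin 3)} {i : Fin 3} (h : Red (p ++ [i])) :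
    List.Chain' (· ≠ ·) (i :: p.reverse) := by
  have := red_rev h
  rwa [List.reverse_append, List.reverse_singleton, List.singleton_append] at this

lemma betR_nonneg {q : List (Fin 3)} {i : Fin 3} (h : List.Chain' (· ≠ ·) (i :: q)) :
    0 ≤ betR q i := ((betR_pos q.length q i rfl h).1).1

lemma betR_ht {q : List (Fin 3)} {i : Fin 3} (h : List.Chain' (· ≠ ·) (i :: q)) :
    2 * (q.length:ℝ) + 1 ≤ ht (betR q i) := (betR_pos q.length q i rfl h).1.2

lemma betR_ht_one {q : List (Fin 3)} {i : Fin 3} (h : List.Chain' (· ≠ ·) (i :: q)) :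
    1 ≤ ht (betR q i) := by
  have := betR_ht h
  have : (0:ℝ) ≤ (q.length : ℝ) := Nat.cast_nonneg _
  linarith [betR_ht h]

lemma bet_nonneg {p : List (Fin 3)} {i : Fin 3} (h : Red (p ++ [i])) : 0 ≤ bet p i := by
  rw [bet_eq_betR]; exact betR_nonneg (red_concat_chain h)

lemma bet_ht {p : List (Fin 3)} {i : Fin 3} (h : Red (p ++ [i])) :
    2 * (p.length:ℝ) + 1 ≤ ht (bet p i) := by
  rw [bet_eq_betR]
  have := betR_ht (red_concat_chain h)
  rwa [List.length_reverse] at this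

lemma bet_ht_one {p : List (Fin 3)} {i : Fin 3} (h : Red (p ++ [i])) : 1 ≤ ht (bet p i) := by
  rw [bet_eq_betR]; exact betR_ht_one (red_concat_chain h)

lemma mapw_rev_cons (x : Fin 3) (r : List (Fin 3)) :
    mapw (x :: r).reverse = mapw r.reverse * σ x := by
  rw [List.reverse_cons, mapw_concat]

lemma eval_neg (x : Fin 3) (r : List (Fin 3)) :
    mapw (x :: r).reverse (α x) = -(betR r x) := by
  rw [mapw_rev_cons, mul_apply, σ_alpha_self, map_neg, ← betR_eq]

lemma eval_ne {x y : Fin 3} (h : y ≠ x) (r : List (Fin 3)) :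
    mapw (y :: r).reverse (α x) = betR (y :: r) x := by
  rw [mapw_rev_cons, mul_apply, σ_alpha_ne h, map_add, map_smul, ← betR_eq, ← betR_eq,
    betR_cons_ne h]

theorem mapw_rev_inj : ∀ (a b : List (Fin 3)), Red a → Red b →
    mapw a.reverse = mapw b.reverse → a = b := by
  intro a
  induction a with
  | nil =>
    intro b _ hb h
    cases b with
    | nil => rfl
    | cons l b₀ =>
      exfalso
      have h1 : α l = -(betR b₀ l) := by
        have h2 : mapw ([] : List (Fin 3)).reverse (α l) = mapw (l :: b₀).reverse (α l) := by
          rw [h]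
        rw [eval_neg] at h2
        simpa using h2
      have h2 := betR_ht_one (q := b₀) (i := l) hb
      have := congrArg ht h1
      rw [ht_alpha, ht_neg] at this
      linarith
  | cons la a₀ ih =>
    intro b ha hb h
    cases b with
    | nil =>
      exfalso
      have h1 : -(betR a₀ la) = α la := by
        have h2 : mapw (la :: a₀).reverse (α la) = mapw ([] : List (Fin 3)).reverse (α la) := by
          rw [h]
        rw [eval_neg] at h2
        simpa using h2
      have h2 := betR_ht_one (q := a₀) (i := la) ha
      have := congrArg ht h1
      rw [ht_alpha, ht_neg] at this
      linarith
    | cons lb b₀ =>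
      by_cases hl : la = lb
      · subst hl
        rw [mapw_rev_cons, mapw_rev_cons] at h
        have h' : mapw a₀.reverse = mapw b₀.reverse := mul_right_cancel h
        rw [ih b₀ ha.tail hb.tail h']
      · exfalso
        have h1 : -(betR a₀ la) = betR (lb :: b₀) la := by
          have h2 : mapw (la :: a₀).reverse (α la) = mapw (lb :: b₀).reverse (α la) := by
            rw [h]
          rw [eval_neg, eval_ne (Ne.symm hl)] at h2
          exact h2
        have h2 := betR_ht_one (q := a₀) (i := la) ha
        have h3 := betR_ht_one (q := lb :: b₀) (i := la)
          (List.isChain_cons_cons.mpr ⟨hl, hb⟩)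
        have := congrArg ht h1
        rw [ht_neg] at this
        linarith

theorem mapw_inj {p q : List (Fin 3)} (hp : Red p) (hq : Red q)
    (h : mapw p = mapw q) : p = q := by
  have := mapw_rev_inj p.reverse q.reverse (red_rev hp) (red_rev hq)
    (by rwa [List.reverse_reverse, List.reverse_reverse])
  exact List.reverse_injective this

theorem junction : ∀ (q p : List (Fin 3)), Red p → Red q →
    ∃ p' q', p' <+: p ∧ q' <:+ q ∧ Red (p' ++ q') ∧
      mapw (p' ++ q') = mapw p * mapw q := by
  intro q
  induction q with
  | nil =>
    intro p hp _
    exact ⟨p, [], List.prefix_refl p, List.suffix_refl [], by simpa using hp,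
      by simp [mapw_append]⟩
  | cons x q₀ IH =>
    intro p hp hq
    rcases List.eq_nil_or_concat p with rfl | ⟨L, b, rfl⟩
    · exact ⟨[], x :: q₀, List.nil_prefix, List.suffix_refl _, by simpa using hq, by simp⟩
    · rw [List.concat_eq_append] at *
      by_cases hbx : b = x
      · subst hbx
        have hkey : mapw (L ++ [b]) * mapw (b :: q₀) = mapw L * mapw q₀ := by
          rw [mapw_concat, mapw_cons, mul_assoc, ← mul_assoc (σ b) (σ b), σ_mul_self, one_mul]
        obtain ⟨p', q', h1, h2, h3, h4⟩ :=
          IH L (hp.prefix (List.prefix_append L [b])) hq.tail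
        exact ⟨p', q', h1.trans (List.prefix_append L [b]),
          h2.trans (List.suffix_cons b q₀), h3, by rw [h4, hkey]⟩
      · refine ⟨L ++ [b], x :: q₀, List.prefix_refl _, List.suffix_refl _, ?_, by
          rw [mapw_append]⟩
        refine List.IsChain.append hp hq ?_
        intro u hu v hv
        rw [List.getLast?_concat] at hu
        simp at hu hv
        subst hu; subst hv; exact hbx

lemma not_chain_split : ∀ l : List (Fin 3), ¬ Red l →
    ∃ (u : List (Fin 3)) (a : Fin 3) (v : List (Fin 3)), l = u ++ a :: a :: v := by
  intro l
  induction l with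
  | nil => intro h; exact absurd List.isChain_nil h
  | cons x t ih =>
    intro h
    cases t with
    | nil => exact absurd (List.isChain_singleton x) h
    | cons y t₀ =>
      by_cases hxy : x = y
      · exact ⟨[], x, t₀, by rw [hxy]; rfl⟩
      · have hnt : ¬ Red (y :: t₀) := fun hc => h (List.isChain_cons_cons.mpr ⟨hxy, hc⟩)
        obtain ⟨u, a, v, huav⟩ := ih hnt
        exact ⟨x :: u, a, v, by rw [huav]; rfl⟩

theorem exists_reduced : ∀ (n : ℕ) (l : List (Fin 3)), l.length = n →
    ∃ c, Red c ∧ mapw c = mapw l := by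
  intro n
  induction n using Nat.strong_induction_on with
  | _ n IH =>
    intro l hlen
    by_cases h : Red l
    · exact ⟨l, h, rfl⟩
    · obtain ⟨u, a, v, rfl⟩ := not_chain_split l h
      have hm : mapw (u ++ a :: a :: v) = mapw (u ++ v) := by
        rw [mapw_append, mapw_append, mapw_cons, mapw_cons, ← mul_assoc (σ a) (σ a),
          σ_mul_self, one_mul]
      have hlt : (u ++ v).length < n := by simp at hlen ⊢; omega
      obtain ⟨c, hc, hmc⟩ := IH _ hlt (u ++ v) rfl
      exact ⟨c, hc, by rw [hmc, ← hm]⟩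

lemma σ_mem (i : Fin 3) : σ i ∈ W := Subgroup.subset_closure (σ_simple i)

lemma mapw_mem (l : List (Fin 3)) : mapw l ∈ W := by
  induction l with
  | nil => exact one_mem W
  | cons x t ih => exact mul_mem (σ_mem x) ih

theorem exists_word {w : V ≃ₗ[ℝ] V} (h : w ∈ W) : ∃ l, Red l ∧ mapw l = w := by
  have h1 : ∃ l, mapw l = w := by
    refine Subgroup.closure_induction (fun f hf => ?_) ⟨[], rfl⟩
      (fun f g _ _ ⟨l₁, h₁⟩ ⟨l₂, h₂⟩ => ⟨l₁ ++ l₂, by rw [mapw_append, h₁, h₂]⟩)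
      (fun f _ ⟨l, hl⟩ => ⟨l.reverse, by rw [mapw_reverse, hl]⟩) h
    obtain ⟨i, rfl⟩ := simple_eq_σ hf
    exact ⟨[i], by simp [mapw]⟩
  obtain ⟨l, hl⟩ := h1
  obtain ⟨c, hc, hmc⟩ := exists_reduced l.length l rfl
  exact ⟨c, hc, by rw [hmc, hl]⟩

end U3

namespace U3

lemma nnsmul_eq (s : ℝ≥0) (v : V) : s • v = (s:ℝ) • v := NNReal.smul_def s v

lemma red_concat_iff {p : List (Fin 3)} {i : Fin 3} :
    Red (p ++ [i]) ↔ List.Chain' (· ≠ ·) (i :: p.reverse) := by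
  constructor
  · exact red_concat_chain
  · intro h
    have := red_rev h
    simpa using this

lemma mem_nnspan_Delta {v : V} : v ∈ nnspan Δ ↔ 0 ≤ v := by
  constructor
  · intro h
    refine Submodule.span_induction (p := fun x _ => 0 ≤ x) ?_ ?_ ?_ ?_ h
    · rintro x ⟨i, rfl⟩; exact alpha_nonneg i
    · exact le_refl 0
    · intro x y _ _ hx hy; exact add_nonneg hx hy
    · intro s x _ hx
      rw [nnsmul_eq]
      intro j
      simp only [Pi.zero_apply, Pi.smul_apply, smul_eq_mul]
      exact mul_nonneg s.2 (hx j)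
  · intro h
    have hsum : ∀ j, (∑ i : Fin 3, ((v i).toNNReal • α i)) j = v j := by
      intro j
      rw [Finset.sum_apply, Fin.sum_univ_three]
      have hc : ∀ (s : ℝ≥0) (i : Fin 3), (s • α i) j = (s:ℝ) * α i j := by
        intro s i; rw [nnsmul_eq]; simp
      rw [hc, hc, hc]
      fin_cases j <;> simp [α, Pi.single_apply, Real.coe_toNNReal _ (h 0), Real.coe_toNNReal _ (h 1),
        Real.coe_toNNReal _ (h 2)]
    have hv : v = ∑ i : Fin 3, ((v i).toNNReal • α i) := funext fun j => (hsum j).symm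
    rw [hv]
    exact Submodule.sum_mem _ fun i _ =>
      Submodule.smul_mem _ _ (Submodule.subset_span ⟨i, rfl⟩)

lemma phi_iff {x : V} : x ∈ Φ ↔ ∃ (l : List (Fin 3)) (i : Fin 3), x = mapw l (α i) := by
  constructor
  · rintro ⟨w, hw, i, rfl⟩
    obtain ⟨l, _, hl⟩ := exists_word hw
    exact ⟨l, i, by rw [hl]⟩
  · rintro ⟨l, i, rfl⟩
    exact ⟨mapw l, mapw_mem l, i, rfl⟩

lemma bet_mem_phipos {p : List (Fin 3)} {i : Fin 3} (h : Red (p ++ [i])) : bet p i ∈ Φpos :=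
  ⟨phi_iff.mpr ⟨p, i, rfl⟩, mem_nnspan_Delta.mpr (bet_nonneg h)⟩

lemma root_form {x : V} (h : x ∈ Φ) :
    (∃ p i, Red (p ++ [i]) ∧ x = bet p i) ∨ (∃ p i, Red (p ++ [i]) ∧ x = -bet p i) := by
  obtain ⟨l, i, rfl⟩ := phi_iff.mp h
  obtain ⟨c, hc, hmc⟩ := exists_reduced l.length l rfl
  have hx : mapw l (α i) = mapw c.reverse.reverse (α i) := by rw [List.reverse_reverse, hmc]
  rw [hx]
  generalize hr : c.reverse = r at *
  have hredr : Red r := by rw [← hr]; exact red_rev hc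
  cases r with
  | nil =>
    left
    exact ⟨[], i, List.isChain_singleton i, by simp [bet, mapw]⟩
  | cons z r₀ =>
    by_cases hz : z = i
    · subst hz
      right
      refine ⟨r₀.reverse, z, red_concat_iff.mpr (by simpa using hredr), ?_⟩
      rw [eval_neg, bet_eq_betR, List.reverse_reverse]
    · left
      refine ⟨(z :: r₀).reverse, i,
        red_concat_iff.mpr (by simpa [List.Chain'] using List.isChain_cons_cons.mpr ⟨Ne.symm hz, hredr⟩), ?_⟩
      rw [eval_ne hz, bet_eq_betR, List.reverse_reverse]

lemma phipos_char {x : V} : x ∈ Φpos ↔ ∃ p i, Red (p ++ [i]) ∧ x = bet p i := by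
  constructor
  · rintro ⟨hΦ, hsp⟩
    rcases root_form hΦ with h | ⟨p, i, hred, hx⟩
    · exact h
    · exfalso
      have h0 : 0 ≤ x := mem_nnspan_Delta.mp hsp
      have h1 : 1 ≤ ht (bet p i) := bet_ht_one hred
      have h2 : 0 ≤ ht x := ht_nonneg h0
      rw [hx, ht_neg] at h2
      linarith
  · rintro ⟨p, i, hred, rfl⟩
    exact bet_mem_phipos hred

lemma phipos_ht {x : V} (h : x ∈ Φpos) : 1 ≤ ht x := by
  obtain ⟨p, i, hred, rfl⟩ := phipos_char.mp h
  exact bet_ht_one hred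

lemma neg_not_phipos {x : V} (h : x ∈ Φpos) : -x ∉ Φpos := by
  intro h'
  have h1 := phipos_ht h
  have h2 := phipos_ht h'
  rw [ht_neg] at h2
  linarith

lemma neg_mem_phi {x : V} (h : x ∈ Φ) : -x ∈ Φ := by
  obtain ⟨l, i, rfl⟩ := phi_iff.mp h
  exact phi_iff.mpr ⟨l ++ [i], i, by rw [mapw_concat, mul_apply, σ_alpha_self, map_neg]⟩

lemma w_phi {u : V ≃ₗ[ℝ] V} (hu : u ∈ W) {x : V} (hx : x ∈ Φ) : u x ∈ Φ := by
  obtain ⟨w, hw, i, rfl⟩ := hx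
  exact ⟨u * w, mul_mem hu hw, i, rfl⟩

lemma root_pm {x : V} (h : x ∈ Φ) : x ∈ Φpos ∨ -x ∈ Φpos := by
  rcases root_form h with ⟨p, i, hred, rfl⟩ | ⟨p, i, hred, hx⟩
  · exact Or.inl (bet_mem_phipos hred)
  · right; rw [hx, neg_neg]; exact bet_mem_phipos hred

lemma alpha_inj {i j : Fin 3} (h : α i = α j) : i = j := by
  by_contra hne
  have := congrFun h i
  simp [α, Pi.single_apply, hne, Ne.symm hne] at this

theorem bet_inj {p q : List (Fin 3)} {i j : Fin 3} (hp : Red (p ++ [i])) (hq : Red (q ++ [j]))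
    (h : bet p i = bet q j) : p = q ∧ i = j := by
  have hredp : Red p := hp.prefix (List.prefix_append p [i])
  have hredq : Red q := hq.prefix (List.prefix_append q [j])
  obtain ⟨p', q', hpre, hsuf, hred, hmap⟩ := junction p q.reverse (red_rev hredq) hredp
  have heval : mapw (p' ++ q') (α i) = α j := by
    rw [hmap, mul_apply]
    show mapw q.reverse (bet p i) = α j
    rw [h]
    show mapw q.reverse (mapw q (α j)) = α j
    rw [mapw_reverse]
    exact (mapw q).symm_apply_apply (α j)
  set f := p' ++ q' with hf
  have hfr : f = f.reverse.reverse := (List.reverse_reverse f).symm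
  have hredfr : Red f.reverse := red_rev hred
  cases hr : f.reverse with
  | nil =>
    have hfnil : f = [] := by rw [hfr, hr]; rfl
    have hij : i = j := by
      apply alpha_inj
      have : mapw f (α i) = α i := by rw [hfnil]; simp
      rw [← this, heval]
    have hmap1 : mapw p = mapw q := by
      have h1 : mapw f = 1 := by rw [hfnil]; rfl
      have h2 : mapw q.reverse * mapw p = 1 := by rw [← hmap, h1]
      rw [mapw_reverse] at h2
      exact (inv_mul_eq_one.mp h2).symm
    exact ⟨mapw_inj hredp hredq hmap1, hij⟩
  | cons z r₀ =>
    exfalso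
    rw [hr] at hredfr
    have heval' : mapw (z :: r₀).reverse (α i) = α j := by
      rw [← hr, ← hfr]; exact heval
    by_cases hz : z = i
    · subst hz
      rw [eval_neg] at heval'
      have h1 := betR_ht_one (q := r₀) (i := z) hredfr
      have := congrArg ht heval'
      rw [ht_neg, ht_alpha] at this
      linarith
    · rw [eval_ne hz] at heval'
      have h1 := betR_ht (q := z :: r₀) (i := i) (List.isChain_cons_cons.mpr ⟨Ne.symm hz, hredfr⟩)
      have hhe := congrArg ht heval'
      rw [ht_alpha] at hhe
      rw [hhe] at h1
      have hn : (0:ℝ) ≤ (r₀.length : ℝ) := Nat.cast_nonneg _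
      have hlen : ((z :: r₀).length : ℝ) = (r₀.length : ℝ) + 1 := by
        push_cast [List.length_cons]; ring
      rw [hlen] at h1
      linarith

end U3

namespace U3

def Bv (c : List (Fin 3)) (j : ℕ) : V := bet (c.take j) (c.getD j 0)

def InvSet (c : List (Fin 3)) : Set V := {x | ∃ j < c.length, x = Bv c j}

lemma red_take_concat {c : List (Fin 3)} (hc : Red c) {j : ℕ} (hj : j < c.length) :
    Red (c.take j ++ [c.getD j 0]) := by
  rw [List.getD_eq_getElem c 0 hj, ← List.concat_eq_append, List.take_concat_get hj]
  exact hc.prefix (List.take_prefix _ c)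

lemma Bv_mem_phipos {c : List (Fin 3)} (hc : Red c) {j : ℕ} (hj : j < c.length) :
    Bv c j ∈ Φpos := bet_mem_phipos (red_take_concat hc hj)

lemma mem_inversions_iff {w : V ≃ₗ[ℝ] V} {x : V} :
    x ∈ Inversions w ↔ x ∈ Φpos ∧ -(w.symm x) ∈ Φpos := by
  constructor
  · rintro ⟨hx, y, hy, rfl⟩
    exact ⟨hx, by rw [w.symm_apply_apply]; exact Set.mem_neg.mp hy⟩
  · rintro ⟨hx, hy⟩
    exact ⟨hx, w.symm x, Set.mem_neg.mpr hy, w.apply_symm_apply x⟩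

theorem inversions_eq {c : List (Fin 3)} (hc : Red c) : Inversions (mapw c) = InvSet c := by
  ext x
  constructor
  · intro hx
    obtain ⟨hxpos, hneg⟩ := mem_inversions_iff.mp hx
    obtain ⟨e, m, hrede, hbe⟩ := phipos_char.mp hneg
    have hrede' : Red e := hrede.prefix (List.prefix_append e [m])
    obtain ⟨p', q', hpre, hsuf, hredf, hmapf⟩ := junction e c hc hrede'
    set f := p' ++ q' with hf
    have hxf : x = -(mapw f (α m)) := by
      have h1 : (mapw c).symm x = -(bet e m) := by
        rw [← hbe, neg_neg]
      have h2 : x = mapw c (-(bet e m)) := by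
        rw [← h1, (mapw c).apply_symm_apply]
      rw [h2, hmapf, map_neg]
      show -(mapw c (bet e m)) = -((mapw c) (mapw e (α m)))
      rfl
    by_cases hfm : Red (f ++ [m])
    · exfalso
      have : -x ∈ Φpos := by
        rw [hxf, neg_neg]
        exact bet_mem_phipos hfm
      exact neg_not_phipos hxpos this
    · have hlast : f.getLast? = some m := by
        rcases h : f.getLast? with _ | u
        · exfalso
          apply hfm
          refine List.IsChain.append hredf (List.isChain_singleton m) ?_
          intro u hu v hv; rw [h] at hu; cases hu
        · by_contra hum
          apply hfm
          refine List.IsChain.append hredf (List.isChain_singleton m) ?_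
          intro a ha v hv
          rw [h] at ha; simp at ha hv
          subst ha; subst hv
          intro hc'; exact hum (by rw [hc'])
      obtain ⟨f₀, hff⟩ := List.getLast?_eq_some_iff.mp hlast
      -- show q' = []
      have hq'nil : q' = [] := by
        rcases List.eq_nil_or_concat q' with h | ⟨L, b, hq⟩
        · exact h
        · exfalso
          rw [List.concat_eq_append] at hq
          have hbm : b = m := by
            have : f.getLast? = some b := by
              rw [hf, hq, ← List.append_assoc, List.getLast?_concat]
            rw [hlast] at this; injection this with h'; exact h'.symm
          obtain ⟨s, hs⟩ := hsuf
          have : Red (e ++ [m]) := hrede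
          rw [← hs, hq, hbm] at this
          obtain ⟨-, -, hjunc⟩ := List.isChain_append.mp this
          exact hjunc m (by simp [List.getLast?_append, List.getLast?_concat]) m (by simp) rfl
      rw [hq'nil, List.append_nil] at hf
      rw [hf] at hff
      obtain ⟨t, hts⟩ := hpre
      set j := f₀.length with hjdef
      have hc_eq : c = f₀ ++ ([m] ++ t) := by
        rw [← hts, hff, List.append_assoc]
      have hjlt : j < c.length := by
        rw [hc_eq]; simp; omega
      have htake : c.take j = f₀ := by
        rw [hc_eq, hjdef]; exact List.take_left
      have hget : c.getD j 0 = m := by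
        have h0 : c.getD j 0 = (f₀ ++ ([m] ++ t)).getD j 0 := by rw [← hc_eq]
        rw [h0, hjdef, List.getD_eq_getElem _ 0 (by simp),
          List.getElem_append_right (le_refl f₀.length)]
        simp
      refine ⟨j, hjlt, ?_⟩
      show x = bet (c.take j) (c.getD j 0)
      rw [htake, hget, hxf, hf, hff, mapw_concat, mul_apply, σ_alpha_self, map_neg, neg_neg]
      rfl
  · rintro ⟨j, hj, rfl⟩
    apply mem_inversions_iff.mpr
    refine ⟨Bv_mem_phipos hc hj, ?_⟩
    have hdc : c.drop j = c.getD j 0 :: c.drop (j+1) := by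
      rw [List.getD_eq_getElem c 0 hj]
      exact List.drop_eq_getElem_cons hj
    set m := c.getD j 0 with hm
    set d' := c.drop (j+1) with hd'
    have hsymm : (mapw c).symm (Bv c j) = -(mapw d'.reverse (α m)) := by
      have hsplit : c = c.take j ++ (m :: d') := by
        rw [← hdc]; exact (List.take_append_drop j c).symm
      have h2 : mapw c = mapw (c.take j) * (σ m * mapw d') := by
        conv_lhs => rw [hsplit]
        rw [mapw_append, mapw_cons]
      have h3 : mapw c (-(mapw d'.reverse (α m))) = Bv c j := by
        rw [h2]
        show mapw (c.take j) (σ m (mapw d' (-(mapw d'.reverse (α m))))) = Bv c j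
        rw [map_neg, mapw_reverse]
        rw [show mapw d' ((mapw d')⁻¹ (α m)) = α m from (mapw d').apply_symm_apply (α m)]
        rw [show (σ m) (-α m) = α m by rw [map_neg, σ_alpha_self, neg_neg]]
        rfl
      rw [← h3, (mapw c).symm_apply_apply]
    rw [hsymm, neg_neg]
    have hchain : Red (d'.reverse ++ [m]) := by
      apply red_concat_iff.mpr
      rw [List.reverse_reverse]
      have : List.Chain' (· ≠ ·) (c.drop j) := hc.drop j
      rwa [hdc] at this
    have : mapw d'.reverse (α m) = bet d'.reverse m := rfl
    rw [this]
    exact bet_mem_phipos hchain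

lemma span_pair_mem {a b x : V} (h : x ∈ nnspan {a, b}) :
    ∃ s t : ℝ, 0 ≤ s ∧ 0 ≤ t ∧ x = s • a + t • b := by
  obtain ⟨s, t, hst⟩ := Submodule.mem_span_pair.mp h
  exact ⟨s, t, s.2, t.2, by rw [← hst, nnsmul_eq, nnsmul_eq]⟩

lemma mem_span_pair_of {a b : V} {s t : ℝ} (hs : 0 ≤ s) (ht : 0 ≤ t) :
    s • a + t • b ∈ nnspan {a, b} := by
  show s • a + t • b ∈ Submodule.span ℝ≥0 {a, b}
  exact Submodule.mem_span_pair.mpr ⟨s.toNNReal, t.toNNReal, by simp [nnsmul_eq, Real.coe_toNNReal _ hs, Real.coe_toNNReal _ ht]⟩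

theorem inversions_biclosed {w : V ≃ₗ[ℝ] V} (hw : w ∈ W) : IsBiclosed (Inversions w) := by
  have hsymmW : ∀ x ∈ Φ, w.symm x ∈ Φ := fun x hx => w_phi (inv_mem hw) hx
  refine ⟨fun x hx => hx.1, ?_, ?_⟩
  · intro a ha b hb x ⟨hsp, hxpos⟩
    obtain ⟨hapos, hna⟩ := mem_inversions_iff.mp ha
    obtain ⟨hbpos, hnb⟩ := mem_inversions_iff.mp hb
    obtain ⟨s, t, hs, ht, hx⟩ := span_pair_mem hsp
    apply mem_inversions_iff.mpr
    refine ⟨hxpos, ?_⟩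
    have hkey : -(w.symm x) = s • (-(w.symm a)) + t • (-(w.symm b)) := by
      rw [hx, map_add, map_smul, map_smul]
      module
    constructor
    · rw [show -(w.symm x) = w.symm (-x) by rw [map_neg]]
      exact hsymmW _ (neg_mem_phi hxpos.1)
    · apply (mem_nnspan_Delta (v := -(w.symm x))).mpr
      rw [hkey]
      have h1 := mem_nnspan_Delta.mp hna.2
      have h2 := mem_nnspan_Delta.mp hnb.2
      intro j
      have h1j := h1 j; have h2j := h2 j
      simp only [Pi.zero_apply] at h1j h2j ⊢
      simp only [Pi.add_apply, Pi.smul_apply, smul_eq_mul]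
      have := mul_nonneg hs h1j
      have := mul_nonneg ht h2j
      linarith
  · intro a ha b hb x ⟨hsp, hxpos⟩
    obtain ⟨hapos, hanot⟩ := ha
    obtain ⟨hbpos, hbnot⟩ := hb
    have hwa : w.symm a ∈ Φpos := by
      rcases root_pm (hsymmW a hapos.1) with h | h
      · exact h
      · exact absurd (mem_inversions_iff.mpr ⟨hapos, h⟩) hanot
    have hwb : w.symm b ∈ Φpos := by
      rcases root_pm (hsymmW b hbpos.1) with h | h
      · exact h
      · exact absurd (mem_inversions_iff.mpr ⟨hbpos, h⟩) hbnot
    refine ⟨hxpos, fun hxinv => ?_⟩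
    obtain ⟨-, hnx⟩ := mem_inversions_iff.mp hxinv
    obtain ⟨s2, t2, hs2, ht2, hx⟩ := span_pair_mem hsp
    have hkey : w.symm x = s2 • (w.symm a) + t2 • (w.symm b) := by
      rw [hx, map_add, map_smul, map_smul]
    have h1 := mem_nnspan_Delta.mp hwa.2
    have h2 := mem_nnspan_Delta.mp hwb.2
    have hge : 0 ≤ ht (w.symm x) := by
      apply ht_nonneg
      rw [hkey]
      intro j
      have h1j := h1 j; have h2j := h2 j
      simp only [Pi.zero_apply] at h1j h2j ⊢
      simp only [Pi.add_apply, Pi.smul_apply, smul_eq_mul]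
      have := mul_nonneg hs2 h1j
      have := mul_nonneg ht2 h2j
      linarith
    have hlt := phipos_ht hnx
    rw [ht_neg] at hlt
    linarith

end U3

namespace U3

lemma getD_adj {c : List (Fin 3)} (hc : Red c) (s : ℕ) (hs : s + 1 < c.length) :
    c.getD s 0 ≠ c.getD (s+1) 0 := by
  have h' : s < c.length - 1 := by omega
  have := List.isChain_iff_getElem.mp hc s hs
  rw [List.getD_eq_getElem c 0 (by omega), List.getD_eq_getElem c 0 hs]
  simpa [List.get_eq_getElem] using this

lemma take_concat_getD {c : List (Fin 3)} (s : ℕ) (hs : s < c.length) :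
    c.take s ++ [c.getD s 0] = c.take (s+1) := by
  rw [List.getD_eq_getElem c 0 hs, ← List.concat_eq_append, List.take_concat_get hs]

lemma Bv_rec {c : List (Fin 3)} (hc : Red c) (s : ℕ) (hs : s + 1 < c.length) :
    Bv c (s+1) = (2:ℝ) • Bv c s + bet (c.take s) (c.getD (s+1) 0) := by
  have hsplit : c.take (s+1) = c.take s ++ [c.getD s 0] := (take_concat_getD s (by omega)).symm
  show bet (c.take (s+1)) (c.getD (s+1) 0) = _
  rw [hsplit]
  show mapw (c.take s ++ [c.getD s 0]) (α (c.getD (s+1) 0)) = _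
  rw [mapw_concat, mul_apply, σ_alpha_ne (getD_adj hc s hs), map_add, map_smul]
  show bet (c.take s) (c.getD (s+1) 0) + (2:ℝ) • (bet (c.take s) (c.getD s 0)) = _
  show _ = (2:ℝ) • bet (c.take s) (c.getD s 0) + bet (c.take s) (c.getD (s+1) 0)
  abel

lemma caseA {c : List (Fin 3)} (hc : Red c) (s : ℕ) (hs : s + 2 < c.length)
    (he : c.getD (s+2) 0 = c.getD s 0) :
    Bv c (s+2) = (2:ℝ) • Bv c (s+1) - Bv c s := by
  have h1 := Bv_rec hc (s+1) hs
  rw [h1, he]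
  have hsplit : c.take (s+1) = c.take s ++ [c.getD s 0] := (take_concat_getD s (by omega)).symm
  have h2 : bet (c.take (s+1)) (c.getD s 0) = -(Bv c s) := by
    rw [hsplit]
    show mapw (c.take s ++ [c.getD s 0]) (α (c.getD s 0)) = _
    rw [mapw_concat, mul_apply, σ_alpha_self, map_neg]
    rfl
  rw [h2]
  abel

lemma caseB_red {c : List (Fin 3)} (hc : Red c) (s : ℕ) (hs : s + 1 < c.length)
    (hB : s = 0 ∨ c.getD (s+1) 0 ≠ c.getD (s-1) 0) :
    Red (c.take s ++ [c.getD (s+1) 0]) := by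
  by_cases hs0 : s = 0
  · subst hs0
    simp [List.Chain']
  · obtain ⟨s', rfl⟩ : ∃ s', s = s' + 1 := ⟨s - 1, by omega⟩
    have hB' : c.getD (s'+1+1) 0 ≠ c.getD s' 0 := by
      rcases hB with h | h
      · omega
      · simpa using h
    refine List.IsChain.append (hc.prefix (List.take_prefix _ c)) (List.isChain_singleton _) ?_
    intro u hu v hv
    rw [show c.take (s'+1) = c.take s' ++ [c.getD s' 0] from (take_concat_getD s' (by omega)).symm,
      List.getLast?_concat] at hu
    simp only [Option.mem_some_iff, List.head?_cons] at hu hv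
    subst hu; subst hv
    exact fun hcc => hB' hcc.symm

lemma caseB_notin {c : List (Fin 3)} (hc : Red c) (s : ℕ) (hs : s + 1 < c.length)
    (hred : Red (c.take s ++ [c.getD (s+1) 0])) :
    bet (c.take s) (c.getD (s+1) 0) ∉ InvSet c := by
  rintro ⟨j, hj, heq⟩
  obtain ⟨hteq, hgeq⟩ := bet_inj hred (red_take_concat hc hj) heq
  have hsj : s = j := by
    have := congrArg List.length hteq
    simp only [List.length_take] at this
    omega
  subst hsj
  exact getD_adj hc s hs hgeq.symm

lemma arith {c : List (Fin 3)} (r' m : ℕ)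
    (hA : ∀ s, r' ≤ s → s + 2 ≤ m → Bv c (s+2) = (2:ℝ) • Bv c (s+1) - Bv c s) :
    ∀ n, r' + 1 + n ≤ m →
      Bv c (r'+1+n) = Bv c (r'+1) + (n:ℝ) • (Bv c (r'+1) - Bv c r') := by
  intro n
  induction n using Nat.strong_induction_on with
  | _ n IH =>
    match n with
    | 0 => intro _; simp
    | 1 =>
      intro hle
      have h1 := hA r' (le_refl r') (by omega)
      rw [show r' + 1 + 1 = r' + 2 by omega, h1]
      push_cast
      module
    | (n''+2) =>
      intro hle
      have h1 := hA (r' + n'' + 1) (by omega) (by omega)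
      have IH1 := IH (n''+1) (by omega) (by omega)
      have IH0 := IH n'' (by omega) (by omega)
      rw [show r' + 1 + (n''+2) = (r' + n'' + 1) + 2 by omega, h1,
        show (r' + n'' + 1) + 1 = r' + 1 + (n''+1) by omega, IH1,
        show r' + n'' + 1 = r' + 1 + n'' by omega, IH0]
      push_cast
      module

theorem forcing {c : List (Fin 3)} (hc : Red c) (hcne : c ≠ []) {R' : Set V}
    (hbc : IsBiclosed R') (hsub : R' ⊆ InvSet c)
    (hlast : Bv c (c.length - 1) ∈ R') : ∀ j, j < c.length → Bv c j ∈ R' := by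
  classical
  set k := c.length with hk
  have hk1 : 1 ≤ k := List.length_pos_iff.mpr hcne
  by_contra hcon
  push_neg at hcon
  obtain ⟨jw, hjwk, hjwR⟩ := hcon
  have hex : ∃ j, j < k ∧ Bv c j ∉ R' := ⟨jw, hjwk, hjwR⟩
  obtain ⟨j₀, ⟨hj₀k, hj₀not⟩, hminP⟩ :
      ∃ j, (j < k ∧ Bv c j ∉ R') ∧ ∀ i, i < j → ¬(i < k ∧ Bv c i ∉ R') :=
    ⟨Nat.find hex, Nat.find_spec hex, fun i hi => Nat.find_min hex hi⟩
  have hmin : ∀ i, i < j₀ → Bv c i ∈ R' := by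
    intro i hi
    by_contra hiR
    exact hminP i hi ⟨by omega, hiR⟩
  have hj₀lt : j₀ < k - 1 := by
    have : j₀ ≠ k - 1 := fun h => hj₀not (by rw [h]; exact hlast)
    omega
  have hex2 : ∃ m, j₀ < m ∧ m ≤ k - 1 ∧ Bv c m ∈ R' := ⟨k-1, hj₀lt, le_refl _, hlast⟩
  obtain ⟨m₀, ⟨hm₀gt, hm₀le, hm₀R⟩, hminM⟩ :
      ∃ m, (j₀ < m ∧ m ≤ k - 1 ∧ Bv c m ∈ R') ∧
        ∀ i, i < m → ¬(j₀ < i ∧ i ≤ k - 1 ∧ Bv c i ∈ R') :=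
    ⟨Nat.find hex2, Nat.find_spec hex2, fun i hi => Nat.find_min hex2 hi⟩
  have hnotR : ∀ i, j₀ ≤ i → i < m₀ → Bv c i ∉ R' := by
    intro i h1 h2
    rcases Nat.eq_or_lt_of_le h1 with rfl | hgt
    · exact hj₀not
    · intro hiR
      exact hminM i h2 ⟨hgt, by omega, hiR⟩
  by_cases hB : ∃ t, t ≤ m₀ ∧ (j₀ < t ∧ (t = 1 ∨ c.getD t 0 ≠ c.getD (t-2) 0))
  · -- Case (b): there is a "new letter" position; take the greatest
    obtain ⟨tw, htwle, htwP⟩ := hB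
    obtain ⟨t₁, ht₁P, ht₁le, hgreat⟩ :
        ∃ t₁, (j₀ < t₁ ∧ (t₁ = 1 ∨ c.getD t₁ 0 ≠ c.getD (t₁-2) 0)) ∧ t₁ ≤ m₀ ∧
          ∀ t', t₁ < t' → t' ≤ m₀ →
            ¬(j₀ < t' ∧ (t' = 1 ∨ c.getD t' 0 ≠ c.getD (t'-2) 0)) :=
      ⟨Nat.findGreatest (fun t' => j₀ < t' ∧ (t' = 1 ∨ c.getD t' 0 ≠ c.getD (t'-2) 0)) m₀,
        Nat.findGreatest_spec (P := fun t' => j₀ < t' ∧ (t' = 1 ∨ c.getD t' 0 ≠ c.getD (t'-2) 0))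
          htwle htwP,
        Nat.findGreatest_le m₀,
        fun t' h1 h2 =>
          Nat.findGreatest_is_greatest
            (P := fun t' => j₀ < t' ∧ (t' = 1 ∨ c.getD t' 0 ≠ c.getD (t'-2) 0)) h1 h2⟩
    obtain ⟨ht₁gt, ht₁B⟩ := ht₁P
    obtain ⟨r', rfl⟩ : ∃ r', t₁ = r' + 1 := ⟨t₁ - 1, by omega⟩
    have hAall : ∀ s, r' ≤ s → s + 2 ≤ m₀ → Bv c (s+2) = (2:ℝ) • Bv c (s+1) - Bv c s := by
      intro s hrs hsm
      have hnp := hgreat (s+2) (by omega) hsm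
      push_neg at hnp
      have hnp' := hnp (by omega)
      exact caseA hc s (by omega) (by simpa using hnp'.2)
    have harith := arith r' m₀ hAall (m₀ - (r'+1)) (by omega)
    rw [show r' + 1 + (m₀ - (r'+1)) = m₀ by omega] at harith
    set g := bet (c.take r') (c.getD (r'+1) 0) with hgdef
    have hrec : Bv c (r'+1) = (2:ℝ) • Bv c r' + g := Bv_rec hc r' (by omega)
    set N : ℝ := ((m₀ - (r'+1) : ℕ) : ℝ) with hNdef
    have hNnn : 0 ≤ N := Nat.cast_nonneg _
    have hcomb : Bv c m₀ = (N+2) • Bv c r' + (N+1) • g := by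
      rw [harith, hrec]
      module
    have hgred : Red (c.take r' ++ [c.getD (r'+1) 0]) := by
      apply caseB_red hc r' (by omega)
      rcases ht₁B with h | h
      · left; omega
      · right; simpa using h
    have hgpos : g ∈ Φpos := bet_mem_phipos hgred
    have hgnot : g ∉ R' := fun hgR => caseB_notin hc r' (by omega) hgred (hsub hgR)
    have hr'not : Bv c r' ∉ R' := hnotR r' (by omega) (by omega)
    have hr'pos : Bv c r' ∈ Φpos := Bv_mem_phipos hc (by omega)
    have hm₀pos : Bv c m₀ ∈ Φpos := Bv_mem_phipos hc (by omega)
    have hspan : Bv c m₀ ∈ nnspan {Bv c r', g} := by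
      rw [hcomb]
      exact mem_span_pair_of (by linarith) (by linarith)
    have := hbc.2.2 (Bv c r') ⟨hr'pos, hr'not⟩ g ⟨hgpos, hgnot⟩ ⟨hspan, hm₀pos⟩
    exact this.2 hm₀R
  · -- Case (a): all positions in (j₀, m₀] repeat; dihedral progression
    push_neg at hB
    have hj₀1 : 1 ≤ j₀ := by
      have := hB (j₀+1) (by omega)
      obtain ⟨h1, -⟩ := this (by omega)
      omega
    obtain ⟨r', rfl⟩ : ∃ r', j₀ = r' + 1 := ⟨j₀ - 1, by omega⟩
    have hAall : ∀ s, r' ≤ s → s + 2 ≤ m₀ → Bv c (s+2) = (2:ℝ) • Bv c (s+1) - Bv c s := by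
      intro s hrs hsm
      have hnp := hB (s+2) hsm
      obtain ⟨-, he⟩ := hnp (by omega)
      exact caseA hc s (by omega) (by simpa using he)
    have harith := arith r' m₀ hAall (m₀ - (r'+1)) (by omega)
    rw [show r' + 1 + (m₀ - (r'+1)) = m₀ by omega] at harith
    set N : ℝ := ((m₀ - (r'+1) : ℕ) : ℝ) with hNdef
    have hN1 : 1 ≤ N := by
      rw [hNdef]
      exact_mod_cast Nat.one_le_iff_ne_zero.mpr (by omega)
    have hcomb : Bv c (r'+1) = (1/(N+1)) • Bv c m₀ + (N/(N+1)) • Bv c r' := by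
      funext jj
      have hco := congrFun harith jj
      simp only [Pi.add_apply, Pi.smul_apply, Pi.sub_apply, smul_eq_mul] at hco
      simp only [Pi.add_apply, Pi.smul_apply, smul_eq_mul]
      have hne : N + 1 ≠ 0 := by linarith
      field_simp
      linarith [hco]
    have hr'R : Bv c r' ∈ R' := hmin r' (by omega)
    have hj₀pos : Bv c (r'+1) ∈ Φpos := Bv_mem_phipos hc (by omega)
    have hspan : Bv c (r'+1) ∈ nnspan {Bv c m₀, Bv c r'} := by
      rw [hcomb]
      refine mem_span_pair_of ?_ ?_
      · positivity
      · positivity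
    have := hbc.2.1 (Bv c m₀) hm₀R (Bv c r') hr'R ⟨hspan, hj₀pos⟩
    exact hj₀not this

end U3

open U3 in
/-- For every nonidentity `w ∈ W`, the inversion set `Inv(w)` is a complete
join-irreducible of the extended weak order: there is a biclosed set `R* ⊊ Inv(w)`
such that every biclosed `R' ⊊ Inv(w)` satisfies `R' ⊆ R*`. -/
theorem inversion_set_complete_join_irreducible (w : V ≃ₗ[ℝ] V)
    (hw : w ∈ W) (hne : w ≠ 1) :
    ∃ Rstar : Set V, IsBiclosed Rstar ∧ Rstar ⊂ Inversions w ∧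
      ∀ R' : Set V, IsBiclosed R' → R' ⊂ Inversions w → R' ⊆ Rstar := by
  classical
  obtain ⟨c, hc, hmc⟩ := U3.exists_word hw
  subst hmc
  have hcne : c ≠ [] := fun h => hne (by rw [h]; rfl)
  have hk1 : 1 ≤ c.length := List.length_pos_iff.mpr hcne
  have hIs : Inversions (mapw c) = InvSet c := inversions_eq hc
  have hc' : Red (c.take (c.length - 1)) := hc.prefix (List.take_prefix _ c)
  have hlen' : (c.take (c.length - 1)).length = c.length - 1 := by
    simp [List.length_take]
  have hIs' : Inversions (mapw (c.take (c.length - 1))) = InvSet (c.take (c.length - 1)) :=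
    inversions_eq hc'
  have hBv_eq : ∀ j, j < c.length - 1 → Bv (c.take (c.length - 1)) j = Bv c j := by
    intro j hj
    have h1 : (c.take (c.length - 1)).take j = c.take j := by
      rw [List.take_take, inf_eq_left.mpr (by omega : j ≤ c.length - 1)]
    have h2 : (c.take (c.length - 1)).getD j 0 = c.getD j 0 := by
      rw [List.getD_eq_getElem _ 0 (by rw [hlen']; omega),
        List.getD_eq_getElem c 0 (by omega)]
      exact List.getElem_take
    show bet ((c.take (c.length - 1)).take j) ((c.take (c.length - 1)).getD j 0)
      = bet (c.take j) (c.getD j 0)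
    rw [h1, h2]
  have hInvSet' : InvSet (c.take (c.length - 1)) = {x | ∃ j, j < c.length - 1 ∧ x = Bv c j} := by
    ext x
    constructor
    · rintro ⟨j, hj, rfl⟩
      rw [hlen'] at hj
      exact ⟨j, hj, hBv_eq j hj⟩
    · rintro ⟨j, hj, rfl⟩
      exact ⟨j, by rw [hlen']; exact hj, (hBv_eq j hj).symm⟩
  refine ⟨Inversions (mapw (c.take (c.length - 1))), inversions_biclosed (mapw_mem _), ?_, ?_⟩
  · rw [ssubset_iff_subset_not_subset, hIs', hInvSet', hIs]
    constructor
    · rintro x ⟨j, hj, rfl⟩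
      exact ⟨j, by omega, rfl⟩
    · intro hcon
      have hmem : Bv c (c.length - 1) ∈ InvSet c := ⟨c.length - 1, by omega, rfl⟩
      obtain ⟨j, hj, heq⟩ := hcon hmem
      obtain ⟨hteq, -⟩ := bet_inj (red_take_concat hc (by omega)) (red_take_concat hc (by omega))
        heq
      have := congrArg List.length hteq
      simp only [List.length_take] at this
      omega
  · intro R' hbR' hss
    rw [ssubset_iff_subset_not_subset] at hss
    obtain ⟨hsubR, hnsup⟩ := hss
    have hsubR' : R' ⊆ InvSet c := by rw [← hIs]; exact hsubR
    by_cases hin : Bv c (c.length - 1) ∈ R'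
    · exfalso
      apply hnsup
      rw [hIs]
      rintro x ⟨j, hj, rfl⟩
      exact forcing hc hcne hbR' hsubR' hin j hj
    · intro x hxR'
      obtain ⟨j, hj, rfl⟩ := hsubR' hxR'
      rw [hIs', hInvSet']
      have hjne : j ≠ c.length - 1 := fun h => hin (by rw [← h]; exact hxR')
      exact ⟨j, by omega, rfl⟩
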